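/- Let P be a finite poset of distributive type and K a field. Then the residue classes modulo J_P of the standard monomials — i.e., of the monomials x_{γ₁} x_{γ₂} ⋯ x_{γ_n} (n ≥ 0) with γ₁ ≤ γ₂ ≤ ⋯ ≤ γ_n a multichain in P, equivalently the monomials whose support is a totally ordered subset of P — form a K-vector space basis of the quotient ring R_K[P] = K[P]/J_P. -/

import Mathlib

set_option linter.unusedSectionVars false
set_option linter.unusedVariables false
set_option maxHeartbeats 1000000
set_option synthInstance.maxHeartbeats 1000000


open MvPolynomial

/-- The partial order on `β` underlies a distributive lattice. -/
def IsDistribOrder (β : Type*) [inst : PartialOrder β] : Prop :=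
  ∃ L : DistribLattice β, L.toLattice.toSemilatticeSup.toPartialOrder = inst

/-- A finite poset with a least element is of *distributive type* if every interval
`[⊥, a]`, with the induced order, is a distributive lattice. -/
def DistribType (P : Type*) [PartialOrder P] [Fintype P] [OrderBot P] : Prop :=
  ∀ a : P, IsDistribOrder (Set.Icc (⊥ : P) a)

open scoped Classical in
/-- The ideal `J_P` of `K[P]` generated by the polynomials `f_{α,β}`:
if `α, β` have no common upper bound, `f_{α,β} = x_α x_β`; otherwise
`f_{α,β} = x_α x_β − x_{α∧β} (Σ_γ x_γ)`, where `α∧β` is the greatest lower bound of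
`α` and `β` in `P` and `γ` ranges over all minimal upper bounds of `α` and `β`. -/
noncomputable def posetIdeal (K : Type*) [Field K] (P : Type*) [PartialOrder P]
    [Fintype P] : Ideal (MvPolynomial P K) :=
  Ideal.span { f | ∃ α β : P,
    ((¬ ∃ c : P, α ≤ c ∧ β ≤ c) ∧ f = X α * X β) ∨
    ((∃ c : P, α ≤ c ∧ β ≤ c) ∧ ∃ m : P, IsGLB {α, β} m ∧
      f = X α * X β - X m *
        ∑ γ ∈ Finset.univ.filter
          (fun γ : P => α ≤ γ ∧ β ≤ γ ∧ ∀ δ : P, α ≤ δ → β ≤ δ → δ ≤ γ → δ = γ),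
          X γ) }

namespace HibiAux
open scoped Classical

lemma isDistribOrder_ops {β : Type*} [inst : PartialOrder β] (h : IsDistribOrder β) :
    ∃ (sup inf : β → β → β),
      (∀ a b, a ≤ sup a b) ∧ (∀ a b, b ≤ sup a b) ∧
      (∀ a b z, a ≤ z → b ≤ z → sup a b ≤ z) ∧
      (∀ a b, inf a b ≤ a) ∧ (∀ a b, inf a b ≤ b) ∧
      (∀ a b z, z ≤ a → z ≤ b → z ≤ inf a b) ∧
      (∀ a b c, inf a (sup b c) = sup (inf a b) (inf a c)) := by
  obtain ⟨L, rfl⟩ := h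
  letI := L
  exact ⟨(· ⊔ ·), (· ⊓ ·), fun a b => le_sup_left, fun a b => le_sup_right,
    fun a b z => sup_le, fun a b => inf_le_left, fun a b => inf_le_right,
    fun a b z => le_inf, fun a b c => inf_sup_left a b c⟩

variable {P : Type*} [PartialOrder P] [Fintype P] [OrderBot P]

/-- `s` is the least upper bound of `x, y` among elements `≤ c`. -/
def RelSup (x y c s : P) : Prop :=
  x ≤ s ∧ y ≤ s ∧ s ≤ c ∧ ∀ z, x ≤ z → y ≤ z → z ≤ c → s ≤ z

/-- global join-irreducibility -/
def Irr (q : P) : Prop := ⊥ < q ∧ ∀ x y, RelSup x y q q → x = q ∨ y = q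

open scoped Classical in
noncomputable def DD (x : P) : Finset P := Finset.univ.filter (fun q => Irr q ∧ q ≤ x)

omit [Fintype P] [OrderBot P] in
lemma relSup_unique {x y c s s' : P} (h : RelSup x y c s) (h' : RelSup x y c s') : s = s' :=
  le_antisymm (h.2.2.2 _ h'.1 h'.2.1 h'.2.2.1) (h'.2.2.2 _ h.1 h.2.1 h.2.2.1)

omit [Fintype P] [OrderBot P] in
lemma relSup_shrink {x y c s q : P} (h : RelSup x y c s) (hsq : s ≤ q) (hqc : q ≤ c) :
    RelSup x y q s :=
  ⟨h.1, h.2.1, hsq, fun z hx hy hz => h.2.2.2 z hx hy (hz.trans hqc)⟩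

lemma mem_DD {q x : P} : q ∈ DD x ↔ Irr q ∧ q ≤ x := by
  simp [DD]

lemma DD_mono {x y : P} (h : x ≤ y) : DD x ⊆ DD y := by
  intro q hq; rw [mem_DD] at *; exact ⟨hq.1, hq.2.trans h⟩

section WithHP
variable (hP : DistribType P)
include hP

lemma exists_relSup {x y c : P} (hx : x ≤ c) (hy : y ≤ c) : ∃ s, RelSup x y c s := by
  obtain ⟨sup, inf, h1, h2, h3, -, -, -, -⟩ := isDistribOrder_ops (hP c)
  set x' : (Set.Icc (⊥ : P) c) := ⟨x, bot_le, hx⟩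
  set y' : (Set.Icc (⊥ : P) c) := ⟨y, bot_le, hy⟩
  exact ⟨(sup x' y' : P), h1 x' y', h2 x' y', (sup x' y').2.2,
    fun z hxz hyz hzc => h3 x' y' ⟨z, bot_le, hzc⟩ hxz hyz⟩

lemma exists_isGLB {x y c : P} (hx : x ≤ c) (hy : y ≤ c) : ∃ m : P, IsGLB {x, y} m := by
  obtain ⟨sup, inf, -, -, -, h4, h5, h6, -⟩ := isDistribOrder_ops (hP c)
  set x' : (Set.Icc (⊥ : P) c) := ⟨x, bot_le, hx⟩
  set y' : (Set.Icc (⊥ : P) c) := ⟨y, bot_le, hy⟩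
  refine ⟨(inf x' y' : P), ?_, ?_⟩
  · rintro t (rfl | ht)
    · exact h4 x' y'
    · simp only [Set.mem_singleton_iff] at ht; subst ht
      exact h5 x' y'
  · intro z hz
    have hzx : z ≤ x := hz (by simp)
    have hzy : z ≤ y := hz (by simp [Set.mem_insert_iff])
    exact h6 x' y' ⟨z, bot_le, hzx.trans hx⟩ hzx hzy

/-- the key distributivity consequence: if `q` is `≤` the relative sup of `x,y`, then
`q` is the relative sup of `q ⊓ x` and `q ⊓ y`. -/
lemma distrib_key {q x y c s mx my : P} (hq : q ≤ c) (hx : x ≤ c) (hy : y ≤ c)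
    (hs : RelSup x y c s) (hmx : IsGLB {q, x} mx) (hmy : IsGLB {q, y} my)
    (hqs : q ≤ s) : RelSup mx my c q := by
  obtain ⟨sup, inf, h1, h2, h3, h4, h5, h6, h7⟩ := isDistribOrder_ops (hP c)
  set x' : (Set.Icc (⊥ : P) c) := ⟨x, bot_le, hx⟩
  set y' : (Set.Icc (⊥ : P) c) := ⟨y, bot_le, hy⟩
  set q' : (Set.Icc (⊥ : P) c) := ⟨q, bot_le, hq⟩
  -- sup x' y' = s
  have hsup : RelSup x y c (sup x' y' : P) :=
    ⟨h1 x' y', h2 x' y', (sup x' y').2.2, fun z hxz hyz hzc => h3 x' y' ⟨z, bot_le, hzc⟩ hxz hyz⟩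
  have hss : (sup x' y' : P) = s := relSup_unique hsup hs
  -- inf q' x' = mx
  have hglbx : IsGLB {q, x} (inf q' x' : P) := by
    refine ⟨?_, ?_⟩
    · rintro t (rfl | ht)
      · exact h4 q' x'
      · simp only [Set.mem_singleton_iff] at ht; subst ht; exact h5 q' x'
    · intro z hz
      have hzq : z ≤ q := hz (by simp)
      have hzx : z ≤ x := hz (by simp [Set.mem_insert_iff])
      exact h6 q' x' ⟨z, bot_le, hzq.trans hq⟩ hzq hzx
  have hglby : IsGLB {q, y} (inf q' y' : P) := by
    refine ⟨?_, ?_⟩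
    · rintro t (rfl | ht)
      · exact h4 q' y'
      · simp only [Set.mem_singleton_iff] at ht; subst ht; exact h5 q' y'
    · intro z hz
      have hzq : z ≤ q := hz (by simp)
      have hzy : z ≤ y := hz (by simp [Set.mem_insert_iff])
      exact h6 q' y' ⟨z, bot_le, hzq.trans hq⟩ hzq hzy
  have hmx' : (inf q' x' : P) = mx := hglbx.unique hmx
  have hmy' : (inf q' y' : P) = my := hglby.unique hmy
  -- q ⊓ (x ⊔ y) = q since q ≤ s
  have hq1 : inf q' (sup x' y') = q' := by
    apply le_antisymm (h4 _ _)
    apply h6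
    · exact le_refl _
    · show (q' : P) ≤ (sup x' y' : P)
      rw [hss]; exact hqs
  have hkey : sup (inf q' x') (inf q' y') = q' := by rw [← h7, hq1]
  -- now read off RelSup mx my c q
  have : RelSup mx my c (sup (inf q' x') (inf q' y') : P) := by
    refine ⟨?_, ?_, (sup _ _).2.2, ?_⟩
    · rw [← hmx']; exact h1 _ _
    · rw [← hmy']; exact h2 _ _
    · intro z hmxz hmyz hzc
      refine h3 _ _ ⟨z, bot_le, hzc⟩ ?_ ?_
      · show (inf q' x' : P) ≤ z; rw [hmx']; exact hmxz
      · show (inf q' y' : P) ≤ z; rw [hmy']; exact hmyz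
  rw [hkey] at this
  exact this

end WithHP

lemma birkhoff_reflect (hP : DistribType P) :
    ∀ x y c : P, x ≤ c → y ≤ c → (∀ q, Irr q → q ≤ x → q ≤ y) → x ≤ y := by
  intro x
  induction x using WellFoundedLT.induction with
  | ind x IH =>
    intro y c hx hy h
    rcases eq_or_ne x ⊥ with rfl | hxbot
    · exact bot_le
    by_cases hirr : Irr x
    · exact h x hirr le_rfl
    · rw [Irr] at hirr
      push_neg at hirr
      obtain ⟨a, b, hab, ha, hb⟩ := hirr (bot_lt_iff_ne_bot.2 hxbot)
      have hax : a < x := lt_of_le_of_ne hab.1 ha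
      have hbx : b < x := lt_of_le_of_ne hab.2.1 hb
      have hay : a ≤ y := IH a hax y c (hax.le.trans hx) hy
        (fun q hq hqa => h q hq (hqa.trans hax.le))
      have hby : b ≤ y := IH b hbx y c (hbx.le.trans hx) hy
        (fun q hq hqb => h q hq (hqb.trans hbx.le))
      obtain ⟨s, hs⟩ := exists_relSup hP (hax.le.trans hx) (hbx.le.trans hx)
      have hsx : s ≤ x := hs.2.2.2 x hab.1 hab.2.1 hx
      have hxs : x ≤ s := hab.2.2.2 s hs.1 hs.2.1 hsx
      calc x ≤ s := hxs
        _ ≤ y := hs.2.2.2 y hay hby hy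

lemma irr_prime (hP : DistribType P) {q x y c s : P} (hirr : Irr q)
    (hs : RelSup x y c s) (hqs : q ≤ s) : q ≤ x ∨ q ≤ y := by
  have hqc : q ≤ c := hqs.trans hs.2.2.1
  have hxc : x ≤ c := hs.1.trans hs.2.2.1
  have hyc : y ≤ c := hs.2.1.trans hs.2.2.1
  obtain ⟨mx, hmx⟩ := exists_isGLB hP hqc hxc
  obtain ⟨my, hmy⟩ := exists_isGLB hP hqc hyc
  have hkey : RelSup mx my c q := distrib_key hP hqc hxc hyc hs hmx hmy hqs
  have := hirr.2 mx my (relSup_shrink hkey le_rfl hqc)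
  rcases this with h | h
  · left
    have : mx ≤ x := hmx.1 (by simp [Set.mem_insert_iff])
    rwa [h] at this
  · right
    have : my ≤ y := hmy.1 (by simp [Set.mem_insert_iff])
    rwa [h] at this

lemma DD_inter {x y m : P} (hm : IsGLB {x, y} m) : DD m = DD x ∩ DD y := by
  apply Finset.Subset.antisymm
  · intro q hq
    rw [mem_DD] at hq
    have h1 : m ≤ x := hm.1 (by simp [Set.mem_insert_iff])
    have h2 : m ≤ y := hm.1 (by simp [Set.mem_insert_iff])
    exact Finset.mem_inter.2 ⟨mem_DD.2 ⟨hq.1, hq.2.trans h1⟩, mem_DD.2 ⟨hq.1, hq.2.trans h2⟩⟩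
  · intro q hq
    rw [Finset.mem_inter, mem_DD, mem_DD] at hq
    refine mem_DD.2 ⟨hq.1.1, hm.2 ?_⟩
    rintro t (rfl | ht)
    · exact hq.1.2
    · simp only [Set.mem_singleton_iff] at ht; subst ht; exact hq.2.2

lemma DD_union (hP : DistribType P) {x y c s : P} (hs : RelSup x y c s) :
    DD s = DD x ∪ DD y := by
  apply Finset.Subset.antisymm
  · intro q hq
    rw [mem_DD] at hq
    rcases irr_prime hP hq.1 hs hq.2 with h | h
    · exact Finset.mem_union_left _ (mem_DD.2 ⟨hq.1, h⟩)
    · exact Finset.mem_union_right _ (mem_DD.2 ⟨hq.1, h⟩)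
  · intro q hq
    rcases Finset.mem_union.1 hq with h | h <;> rw [mem_DD] at h
    · exact mem_DD.2 ⟨h.1, h.2.trans hs.1⟩
    · exact mem_DD.2 ⟨h.1, h.2.trans hs.2.1⟩

lemma DD_reflect (hP : DistribType P) {x y c : P} (hx : x ≤ c) (hy : y ≤ c)
    (h : DD x ⊆ DD y) : x ≤ y :=
  birkhoff_reflect hP x y c hx hy (fun q hq hqx => (mem_DD.1 (h (mem_DD.2 ⟨hq, hqx⟩))).2)

lemma DD_card_lt (hP : DistribType P) {m x : P} (h : m < x) :
    (DD m).card < (DD x).card := by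
  apply Finset.card_lt_card
  refine ⟨DD_mono h.le, fun hsub => ?_⟩
  exact absurd (DD_reflect hP le_rfl h.le hsub) (not_le_of_gt h)

lemma minub_relSup {x y γ : P} (hx : x ≤ γ) (hy : y ≤ γ)
    (hmin : ∀ δ, x ≤ δ → y ≤ δ → δ ≤ γ → δ = γ) : RelSup x y γ γ :=
  ⟨hx, hy, le_rfl, fun z hxz hyz hz => (hmin z hxz hyz hz).ge⟩

lemma relSup_is_minub {x y c s : P} (hs : RelSup x y c s) :
    ∀ δ, x ≤ δ → y ≤ δ → δ ≤ s → δ = s :=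
  fun δ hx hy hδ => le_antisymm hδ (hs.2.2.2 δ hx hy (hδ.trans hs.2.2.1))

lemma minub_le_eq {x y c s γ : P} (hs : RelSup x y c s)
    (hxγ : x ≤ γ) (hyγ : y ≤ γ) (hmin : ∀ δ, x ≤ δ → y ≤ δ → δ ≤ γ → δ = γ)
    (hγc : γ ≤ c) : γ = s := by
  have hsγ : s ≤ γ := hs.2.2.2 γ hxγ hyγ hγc
  exact (hmin s hs.1 hs.2.1 hsγ).symm

section Weight

noncomputable def gg (x : P) : ℕ := (DD x).card

noncomputable def wt (d : P →₀ ℕ) : ℕ :=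
  ∑ x ∈ Finset.univ, d x * ((Fintype.card P) ^ 2 - gg x ^ 2)

lemma gg_sq_le (x : P) : gg x ^ 2 ≤ (Fintype.card P) ^ 2 :=
  Nat.pow_le_pow_left (Finset.card_le_univ _) 2

lemma wt_add (a b : P →₀ ℕ) : wt (a + b) = wt a + wt b := by
  simp [wt, Finsupp.add_apply, add_mul, Finset.sum_add_distrib]

lemma wt_single (x : P) : wt (Finsupp.single x 1) = (Fintype.card P) ^ 2 - gg x ^ 2 := by
  simp [wt, Finsupp.single_apply]

lemma sq_spread {a b x y : ℕ} (h : a + b = x + y) (h1 : a < x) (h2 : a < y) :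
    x ^ 2 + y ^ 2 < a ^ 2 + b ^ 2 := by
  zify at *
  nlinarith [mul_pos (show (0:ℤ) < x - a by omega) (show (0:ℤ) < y - a by omega)]

lemma gg_ineq (hP : DistribType P) {α β m γ : P} (hαβ : ¬ α ≤ β) (hβα : ¬ β ≤ α)
    (hm : IsGLB {α, β} m) (hγα : α ≤ γ) (hγβ : β ≤ γ)
    (hγmin : ∀ δ : P, α ≤ δ → β ≤ δ → δ ≤ γ → δ = γ) :
    gg α ^ 2 + gg β ^ 2 < gg m ^ 2 + gg γ ^ 2 := by
  have hmα : m ≤ α := hm.1 (by simp [Set.mem_insert_iff])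
  have hmβ : m ≤ β := hm.1 (by simp [Set.mem_insert_iff])
  have hmαlt : m < α := lt_of_le_of_ne hmα (by rintro rfl; exact hαβ hmβ)
  have hmβlt : m < β := lt_of_le_of_ne hmβ (by rintro rfl; exact hβα hmα)
  have hsum : gg m + gg γ = gg α + gg β := by
    have h1 : DD m = DD α ∩ DD β := DD_inter hm
    have h2 : DD γ = DD α ∪ DD β := DD_union hP (minub_relSup hγα hγβ hγmin)
    rw [gg, gg, gg, gg, h1, h2, Finset.card_inter_add_card_union]
  exact sq_spread hsum (DD_card_lt hP hmαlt) (DD_card_lt hP hmβlt)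

lemma wt_lt (hP : DistribType P) {α β m γ : P} (hαβ : ¬ α ≤ β) (hβα : ¬ β ≤ α)
    (hm : IsGLB {α, β} m) (hγα : α ≤ γ) (hγβ : β ≤ γ)
    (hγmin : ∀ δ : P, α ≤ δ → β ≤ δ → δ ≤ γ → δ = γ) (d' : P →₀ ℕ) :
    wt (Finsupp.single m 1 + Finsupp.single γ 1 + d') <
      wt (Finsupp.single α 1 + Finsupp.single β 1 + d') := by
  rw [wt_add, wt_add, wt_add, wt_add, wt_single, wt_single, wt_single, wt_single]
  have key := gg_ineq hP hαβ hβα hm hγα hγβ hγmin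
  have h1 := gg_sq_le (P := P) α
  have h2 := gg_sq_le (P := P) β
  have h3 := gg_sq_le (P := P) m
  have h4 := gg_sq_le (P := P) γ
  set G := (Fintype.card P) ^ 2
  set A := gg α ^ 2; set B := gg β ^ 2; set M := gg m ^ 2; set C := gg γ ^ 2
  omega

lemma split_finsupp {d : P →₀ ℕ} {α β : P} (hα : α ∈ d.support) (hβ : β ∈ d.support)
    (hne : α ≠ β) :
    Finsupp.single α 1 + Finsupp.single β 1 + (d - Finsupp.single α 1 - Finsupp.single β 1)
      = d := by
  ext x
  rw [Finsupp.mem_support_iff] at hα hβ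
  simp only [Finsupp.add_apply, Finsupp.tsub_apply, Finsupp.single_apply]
  split_ifs with h1 h2 h2
  · exact absurd (h1.trans h2.symm) hne
  · subst h1; omega
  · subst h2; omega
  · omega

end Weight

section SpanPart

open MvPolynomial
variable (K : Type*) [Field K]

lemma mono_mem_span (hP : DistribType P) :
    ∀ d : P →₀ ℕ, Ideal.Quotient.mk (posetIdeal K P) (monomial d (1 : K)) ∈
      Submodule.span K (Set.range
        (fun e : {e : P →₀ ℕ // IsChain (· ≤ ·) (e.support : Set P)} =>
          Ideal.Quotient.mk (posetIdeal K P) (monomial e.1 (1 : K)))) := by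
  suffices H : ∀ n (d : P →₀ ℕ), wt d = n →
      Ideal.Quotient.mk (posetIdeal K P) (monomial d (1 : K)) ∈
      Submodule.span K (Set.range
        (fun e : {e : P →₀ ℕ // IsChain (· ≤ ·) (e.support : Set P)} =>
          Ideal.Quotient.mk (posetIdeal K P) (monomial e.1 (1 : K)))) by
    exact fun d => H _ d rfl
  intro n
  induction n using Nat.strong_induction_on with
  | _ n IH =>
  intro d hdn
  by_cases hch : IsChain (· ≤ ·) (d.support : Set P)
  · exact Submodule.subset_span ⟨⟨d, hch⟩, rfl⟩
  · unfold IsChain Set.Pairwise at hch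
    push_neg at hch
    obtain ⟨α, hαs, β, hβs, hne, hcomp⟩ := hch
    have hαβ : ¬ α ≤ β := fun h => hcomp.1 h
    have hβα : ¬ β ≤ α := fun h => hcomp.2 h
    rw [Finset.mem_coe] at hαs hβs
    set d' := d - Finsupp.single α 1 - Finsupp.single β 1 with hd'
    have hsplit := split_finsupp hαs hβs hne
    have hmono : (monomial d (1 : K)) = X α * X β * monomial d' 1 := by
      rw [show (X α : MvPolynomial P K) = monomial (Finsupp.single α 1) 1 from rfl,
        show (X β : MvPolynomial P K) = monomial (Finsupp.single β 1) 1 from rfl,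
        monomial_mul, monomial_mul, one_mul, one_mul, hsplit]
    by_cases hub : ∃ c : P, α ≤ c ∧ β ≤ c
    · obtain ⟨c, hαc, hβc⟩ := hub
      obtain ⟨m, hm⟩ := exists_isGLB hP hαc hβc
      set T := Finset.univ.filter
        (fun γ : P => α ≤ γ ∧ β ≤ γ ∧ ∀ δ : P, α ≤ δ → β ≤ δ → δ ≤ γ → δ = γ) with hT
      have hf : (X α * X β - X m * ∑ γ ∈ T, X γ) ∈ posetIdeal K P :=
        Ideal.subset_span ⟨α, β, Or.inr ⟨⟨c, hαc, hβc⟩, m, hm, rfl⟩⟩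
      have heq : Ideal.Quotient.mk (posetIdeal K P) (monomial d (1 : K))
          = Ideal.Quotient.mk (posetIdeal K P) (X m * (∑ γ ∈ T, X γ) * monomial d' 1) := by
        rw [Ideal.Quotient.mk_eq_mk_iff_sub_mem]
        have hrw : monomial d (1 : K) - X m * (∑ γ ∈ T, X γ) * monomial d' 1
            = (X α * X β - X m * ∑ γ ∈ T, X γ) * monomial d' 1 := by
          rw [hmono]; ring
        rw [hrw]
        exact Ideal.mul_mem_right _ _ hf
      rw [heq]
      have hexp : X m * (∑ γ ∈ T, X γ) * monomial d' (1 : K)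
          = ∑ γ ∈ T, monomial (Finsupp.single m 1 + Finsupp.single γ 1 + d') 1 := by
        rw [Finset.mul_sum, Finset.sum_mul]
        apply Finset.sum_congr rfl
        intro γ _
        rw [show (X m : MvPolynomial P K) = monomial (Finsupp.single m 1) 1 from rfl,
          show (X γ : MvPolynomial P K) = monomial (Finsupp.single γ 1) 1 from rfl,
          monomial_mul, monomial_mul, one_mul, one_mul]
      rw [hexp, map_sum]
      apply Submodule.sum_mem
      intro γ hγ
      rw [hT, Finset.mem_filter] at hγ
      refine IH (wt (Finsupp.single m 1 + Finsupp.single γ 1 + d')) ?_ _ rfl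
      rw [← hdn, ← hsplit]
      exact wt_lt hP hαβ hβα hm hγ.2.1 hγ.2.2.1 hγ.2.2.2 d'
    · have hf : (X α * X β : MvPolynomial P K) ∈ posetIdeal K P :=
        Ideal.subset_span ⟨α, β, Or.inl ⟨hub, rfl⟩⟩
      have h0 : Ideal.Quotient.mk (posetIdeal K P) (monomial d (1 : K)) = 0 := by
        rw [Ideal.Quotient.eq_zero_iff_mem, hmono]
        exact Ideal.mul_mem_right _ _ hf
      rw [h0]
      exact Submodule.zero_mem _

lemma span_eq_top (hP : DistribType P) :
    Submodule.span K (Set.range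
      (fun e : {e : P →₀ ℕ // IsChain (· ≤ ·) (e.support : Set P)} =>
        Ideal.Quotient.mk (posetIdeal K P) (monomial e.1 (1 : K)))) = ⊤ := by
  rw [Submodule.eq_top_iff']
  intro z
  obtain ⟨p, rfl⟩ := Ideal.Quotient.mk_surjective z
  rw [p.as_sum, map_sum]
  apply Submodule.sum_mem
  intro v hv
  have : monomial v (coeff v p) = (coeff v p) • monomial v (1 : K) := by
    rw [smul_monomial, smul_eq_mul, mul_one]
  have hsm := map_smul (Ideal.Quotient.mkₐ K (posetIdeal K P)) (coeff v p)
    (monomial v (1 : K))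
  simp only [Ideal.Quotient.mkₐ_eq_mk] at hsm
  rw [this, hsm]
  exact Submodule.smul_mem _ _ (mono_mem_span K hP v)

end SpanPart

section Phi

open MvPolynomial
variable (K : Type*) [Field K]

noncomputable def phi (c : P) : MvPolynomial P K →ₐ[K] MvPolynomial (Option P) K :=
  aeval (fun δ => if δ ≤ c then (X none * ∏ q ∈ DD δ, X (some q)) else 0)

noncomputable def ee (α : P) : Option P →₀ ℕ :=
  Finsupp.single none 1 + ∑ q ∈ DD α, Finsupp.single (some q) 1

noncomputable def EE (d : P →₀ ℕ) : Option P →₀ ℕ := ∑ α ∈ d.support, d α • ee α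

noncomputable def FF (d : P →₀ ℕ) (x : P) : ℕ :=
  ∑ α ∈ d.support.filter (fun α => x ≤ α), d α

noncomputable def degS (d : P →₀ ℕ) : ℕ := ∑ α ∈ d.support, d α

lemma prod_monomial {ι τ : Type*} (s : Finset ι) (f : ι → (τ →₀ ℕ)) :
    ∏ i ∈ s, (monomial (f i) (1 : K)) = monomial (∑ i ∈ s, f i) 1 := by
  classical
  induction s using Finset.cons_induction with
  | empty => simp [monomial_zero']
  | cons a s ha ih =>
    rw [Finset.prod_cons, ih, monomial_mul, one_mul, Finset.sum_cons]

lemma X_prod_eq (α : P) :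
    (X none * ∏ q ∈ DD α, X (some q) : MvPolynomial (Option P) K) = monomial (ee α) 1 := by
  have h1 : ∀ q : Option P, (X q : MvPolynomial (Option P) K)
      = monomial (Finsupp.single q 1) 1 := fun q => rfl
  calc (X none * ∏ q ∈ DD α, X (some q) : MvPolynomial (Option P) K)
      = monomial (Finsupp.single none 1) 1 *
        ∏ q ∈ DD α, monomial (Finsupp.single (some q) 1) (1 : K) := by
        simp only [h1]
    _ = monomial (Finsupp.single none 1) 1 *
        monomial (∑ q ∈ DD α, Finsupp.single (some q) 1) 1 := by rw [prod_monomial]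
    _ = monomial (ee α) 1 := by rw [monomial_mul, one_mul, ee]

lemma phi_X (c δ : P) :
    phi K c (X δ) = if δ ≤ c then (X none * ∏ q ∈ DD δ, X (some q)) else 0 :=
  aeval_X _ δ

lemma phi_monomial_eq (c : P) {d : P →₀ ℕ} (hsupp : ∀ α ∈ d.support, α ≤ c) :
    phi K c (monomial d 1) = monomial (EE d) 1 := by
  rw [monomial_eq, C_1, one_mul, Finsupp.prod, map_prod]
  have : ∀ α ∈ d.support, phi K c (X α ^ d α) = monomial (d α • ee α) 1 := by
    intro α hα
    rw [map_pow, phi_X, if_pos (hsupp α hα), X_prod_eq, monomial_pow, one_pow]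
  rw [Finset.prod_congr rfl this, prod_monomial, EE]

lemma phi_monomial_zero (c : P) {d : P →₀ ℕ} {α : P} (hα : α ∈ d.support) (hc : ¬ α ≤ c) :
    phi K c (monomial d 1) = 0 := by
  rw [monomial_eq, C_1, one_mul, Finsupp.prod, map_prod]
  apply Finset.prod_eq_zero hα
  rw [map_pow, phi_X, if_neg hc]
  exact zero_pow (Finsupp.mem_support_iff.1 hα)

lemma EE_none (d : P →₀ ℕ) : EE d none = degS d := by
  rw [EE, degS, Finsupp.finset_sum_apply]
  apply Finset.sum_congr rfl
  intro α _
  rw [Finsupp.smul_apply, ee, Finsupp.add_apply, Finsupp.single_eq_same,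
    Finsupp.finset_sum_apply]
  have : ∀ q ∈ DD α, (Finsupp.single (some q : Option P) 1) none = 0 := by
    intro q _; rw [Finsupp.single_apply, if_neg (by simp)]
  rw [Finset.sum_congr rfl this, Finset.sum_const_zero, add_zero, smul_eq_mul, mul_one]

lemma EE_some (d : P →₀ ℕ) (q : P) : EE d (some q) = if Irr q then FF d q else 0 := by
  rw [EE, Finsupp.finset_sum_apply]
  have step : ∀ α ∈ d.support, (d α • ee α) (some q) = if q ∈ DD α then d α else 0 := by
    intro α _
    rw [Finsupp.smul_apply, ee, Finsupp.add_apply, Finsupp.single_apply,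
      if_neg (by simp), Finsupp.finset_sum_apply]
    have : ∀ p ∈ DD α, (Finsupp.single (some p : Option P) 1) (some q)
        = if p = q then 1 else 0 := by
      intro p _; rw [Finsupp.single_apply]; simp
    rw [Finset.sum_congr rfl this, Finset.sum_ite_eq' (DD α) q (fun _ => 1)]
    simp only [zero_add, smul_eq_mul]
    split_ifs <;> simp
  rw [Finset.sum_congr rfl step]
  by_cases hq : Irr q
  · rw [if_pos hq, FF, Finset.sum_filter]
    apply Finset.sum_congr rfl
    intro α _
    congr 1
    simp [mem_DD, hq]
  · rw [if_neg hq]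
    apply Finset.sum_eq_zero
    intro α _
    rw [if_neg (fun h => hq (mem_DD.1 h).1)]

end Phi

section PhiIdeal

open MvPolynomial
variable (K : Type*) [Field K]

lemma phi_ideal (hP : DistribType P) (c : P) {p : MvPolynomial P K}
    (hp : p ∈ posetIdeal K P) : phi K c p = 0 := by
  have hker : posetIdeal K P ≤ RingHom.ker (phi K c).toRingHom := by
    rw [posetIdeal, Ideal.span_le]
    rintro f ⟨α, β, hf | hf⟩
    · -- no common upper bound
      obtain ⟨hno, rfl⟩ := hf
      have : ¬ (α ≤ c) ∨ ¬ (β ≤ c) := by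
        by_contra h
        push_neg at h
        exact hno ⟨c, h.1, h.2⟩
      rw [SetLike.mem_coe, RingHom.mem_ker]
      rcases this with h | h
      · show phi K c (X α * X β) = 0
        rw [map_mul, phi_X, if_neg h, zero_mul]
      · show phi K c (X α * X β) = 0
        rw [map_mul, phi_X K c β, if_neg h, mul_zero]
    · obtain ⟨⟨c', hαc', hβc'⟩, m, hm, rfl⟩ := hf
      rw [SetLike.mem_coe, RingHom.mem_ker]
      show phi K c (X α * X β - X m * ∑ γ ∈ _, X γ) = 0
      rw [map_sub, map_mul, map_mul, map_sum]
      by_cases hαβc : α ≤ c ∧ β ≤ c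
      · obtain ⟨hαc, hβc⟩ := hαβc
        obtain ⟨s, hs⟩ := exists_relSup hP hαc hβc
        have hmα : m ≤ α := hm.1 (by simp [Set.mem_insert_iff])
        -- the sum reduces to the single term γ = s
        have hsum : (∑ γ ∈ Finset.univ.filter
            (fun γ : P => α ≤ γ ∧ β ≤ γ ∧ ∀ δ : P, α ≤ δ → β ≤ δ → δ ≤ γ → δ = γ),
            phi K c (X γ)) = X none * ∏ q ∈ DD s, X (some q) := by
          rw [Finset.sum_eq_single_of_mem s]
          · rw [phi_X, if_pos hs.2.2.1]
          · rw [Finset.mem_filter]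
            exact ⟨Finset.mem_univ s, hs.1, hs.2.1, relSup_is_minub hs⟩
          · intro γ hγ hγs
            rw [Finset.mem_filter] at hγ
            rw [phi_X, if_neg]
            intro hγc
            exact hγs (minub_le_eq hs hγ.2.1 hγ.2.2.1 hγ.2.2.2 hγc)
        rw [hsum, phi_X, phi_X, phi_X, if_pos hαc, if_pos hβc, if_pos (hmα.trans hαc)]
        have hDm : DD m = DD α ∩ DD β := DD_inter hm
        have hDs : DD s = DD α ∪ DD β := DD_union hP hs
        rw [hDm, hDs, sub_eq_zero]
        rw [show (X none * ∏ q ∈ DD α, X (some q)) * (X none * ∏ q ∈ DD β, X (some q))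
            = (X none * X none) * ((∏ q ∈ DD α, X (some q)) * ∏ q ∈ DD β, X (some q))
            from by ring,
          show (X none * ∏ q ∈ DD α ∩ DD β, (X (some q) : MvPolynomial (Option P) K)) *
              (X none * ∏ q ∈ DD α ∪ DD β, X (some q))
            = (X none * X none) * ((∏ q ∈ DD α ∪ DD β, X (some q)) *
                ∏ q ∈ DD α ∩ DD β, X (some q)) from by ring,
          Finset.prod_union_inter]
      · -- one of α, β is not below c; all terms vanish
        have hz : ∀ γ : P, γ ∈ Finset.univ.filter
            (fun γ : P => α ≤ γ ∧ β ≤ γ ∧ ∀ δ : P, α ≤ δ → β ≤ δ → δ ≤ γ → δ = γ) →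
            phi K c (X γ) = 0 := by
          intro γ hγ
          rw [Finset.mem_filter] at hγ
          rw [phi_X, if_neg]
          intro hγc
          exact hαβc ⟨hγ.2.1.trans hγc, hγ.2.2.1.trans hγc⟩
        rw [Finset.sum_congr rfl hz, Finset.sum_const_zero, mul_zero, sub_eq_zero]
        rcases not_and_or.1 hαβc with h | h
        · rw [phi_X, if_neg h, zero_mul]
        · rw [phi_X K c β, if_neg h, mul_zero]
    
  exact RingHom.mem_ker.1 (hker hp)

end PhiIdeal

section Recover

lemma FF_mono {d : P →₀ ℕ} {x q : P} (hq : q ≤ x) : FF d x ≤ FF d q := by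
  apply Finset.sum_le_sum_of_subset
  apply Finset.monotone_filter_right
  exact fun α _ hα => hq.trans hα

lemma FF_le_degS (d : P →₀ ℕ) (x : P) : FF d x ≤ degS d :=
  Finset.sum_le_sum_of_subset (Finset.filter_subset _ _)

lemma chain_total {d : P →₀ ℕ} (hch : IsChain (· ≤ ·) (d.support : Set P))
    {α β : P} (hα : α ∈ d.support) (hβ : β ∈ d.support) : α ≤ β ∨ β ≤ α := by
  rcases eq_or_ne α β with rfl | hne
  · exact Or.inl le_rfl
  · exact hch (Finset.mem_coe.2 hα) (Finset.mem_coe.2 hβ) hne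

lemma FF_ge (hP : DistribType P) {c : P} {d : P →₀ ℕ}
    (hch : IsChain (· ≤ ·) (d.support : Set P)) (hsupp : ∀ α ∈ d.support, α ≤ c)
    {x : P} (hx : x ≤ c) {n : ℕ} (hn : n ≤ degS d)
    (hq : ∀ q, Irr q → q ≤ x → n ≤ FF d q) : n ≤ FF d x := by
  by_contra hcon
  push_neg at hcon
  set S := d.support.filter (fun α => ¬ x ≤ α) with hS
  have hSne : S.Nonempty := by
    rcases Finset.eq_empty_or_nonempty S with he | hne
    · exfalso
      have : d.support.filter (fun α => x ≤ α) = d.support := by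
        apply Finset.filter_true_of_mem
        intro α hα
        by_contra hxa
        exact Finset.notMem_empty α (he ▸ Finset.mem_filter.2 ⟨hα, hxa⟩)
      have : FF d x = degS d := by rw [FF, this, degS]
      omega
    · exact hne
  obtain ⟨δ, hδS, hδmax⟩ : ∃ i ∈ S, ∀ x ∈ S, ¬ i < x := by
    obtain ⟨i, hi⟩ := Finset.exists_maximal hSne
    exact ⟨i, hi.1, fun x hx hlt => not_le_of_gt hlt (hi.2 hx hlt.le)⟩
  have hδ1 : δ ∈ d.support := (Finset.mem_filter.1 hδS).1
  have hδ2 : ¬ x ≤ δ := (Finset.mem_filter.1 hδS).2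
  have hall : ∀ q, Irr q → q ≤ x → q ≤ δ := by
    intro q hq1 hq2
    have h1 : FF d x < FF d q := lt_of_lt_of_le hcon (hq q hq1 hq2)
    have hsub : d.support.filter (fun α => x ≤ α) ⊆ d.support.filter (fun α => q ≤ α) :=
      Finset.monotone_filter_right _ (fun α _ hα => hq2.trans hα)
    have : ¬ (d.support.filter (fun α => q ≤ α) ⊆ d.support.filter (fun α => x ≤ α)) := by
      intro hss
      exact absurd (Finset.sum_le_sum_of_subset hss) (by rw [← FF, ← FF]; exact not_le_of_gt h1)
    obtain ⟨α, hα1, hα2⟩ := Finset.not_subset.1 this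
    rw [Finset.mem_filter] at hα1
    have hαS : α ∈ S := Finset.mem_filter.2 ⟨hα1.1, fun hxα =>
      hα2 (Finset.mem_filter.2 ⟨hα1.1, hxα⟩)⟩
    have hαδ : α ≤ δ := by
      rcases chain_total hch hα1.1 hδ1 with h | h
      · exact h
      · rcases eq_or_ne δ α with rfl | hne
        · exact le_rfl
        · exact absurd (lt_of_le_of_ne h hne) (hδmax α hαS)
    exact hα1.2.trans hαδ
  exact hδ2 (birkhoff_reflect hP x δ c hx (hsupp δ hδ1) hall)

lemma FF_expand (d : P →₀ ℕ) (x : P) :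
    FF d x = d x + ∑ y ∈ Finset.univ.filter (fun y => x < y), d y := by
  have h1 : FF d x = ∑ y ∈ Finset.univ.filter (fun y => x ≤ y), d y := by
    rw [FF]
    apply Finset.sum_subset
    · exact Finset.filter_subset_filter _ (fun α _ => Finset.mem_univ α)
    · intro y hy hyn
      rw [Finset.mem_filter] at hy
      by_contra hd
      exact hyn (Finset.mem_filter.2 ⟨Finsupp.mem_support_iff.2 (fun h0 => hd (h0 ▸ rfl)), hy.2⟩)
  have h2 : Finset.univ.filter (fun y => x ≤ y)
      = insert x (Finset.univ.filter (fun y => x < y)) := by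
    ext y
    simp only [Finset.mem_filter, Finset.mem_univ, true_and, Finset.mem_insert]
    constructor
    · intro h; rcases eq_or_lt_of_le h with h' | h'
      · exact Or.inl h'.symm
      · exact Or.inr h'
    · rintro (rfl | h)
      · exact le_rfl
      · exact h.le
  rw [h1, h2, Finset.sum_insert (by simp)]

lemma recover {c : P} {d d' : P →₀ ℕ}
    (hsupp : ∀ α ∈ d.support, α ≤ c) (hsupp' : ∀ α ∈ d'.support, α ≤ c)
    (hFF : ∀ x, x ≤ c → FF d x = FF d' x) : d = d' := by
  ext x
  induction x using WellFoundedGT.induction with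
  | _ x IH =>
  by_cases hxc : x ≤ c
  · have h1 := FF_expand d x
    have h2 := FF_expand d' x
    have h3 : (∑ y ∈ Finset.univ.filter (fun y => x < y), d y)
        = ∑ y ∈ Finset.univ.filter (fun y => x < y), d' y := by
      apply Finset.sum_congr rfl
      intro y hy
      exact IH y (Finset.mem_filter.1 hy).2
    have h4 := hFF x hxc
    omega
  · have hd : d x = 0 := by
      by_contra h
      exact hxc (hsupp x (Finsupp.mem_support_iff.2 h))
    have hd' : d' x = 0 := by
      by_contra h
      exact hxc (hsupp' x (Finsupp.mem_support_iff.2 h))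
    rw [hd, hd']

lemma EE_inj (hP : DistribType P) {c : P} {d d' : P →₀ ℕ}
    (hch : IsChain (· ≤ ·) (d.support : Set P)) (hch' : IsChain (· ≤ ·) (d'.support : Set P))
    (hsupp : ∀ α ∈ d.support, α ≤ c) (hsupp' : ∀ α ∈ d'.support, α ≤ c)
    (hEE : EE d = EE d') : d = d' := by
  have hdeg : degS d = degS d' := by
    rw [← EE_none d, ← EE_none d', hEE]
  have hirr : ∀ q, Irr q → FF d q = FF d' q := by
    intro q hq
    have h1 := EE_some d q
    have h2 := EE_some d' q
    rw [if_pos hq] at h1 h2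
    rw [← h1, ← h2, hEE]
  have key : ∀ x, x ≤ c → FF d x = FF d' x := by
    intro x hx
    apply le_antisymm
    · apply FF_ge hP hch' hsupp' hx (le_trans (FF_le_degS d x) hdeg.le)
      intro q hq1 hq2
      rw [← hirr q hq1]
      exact FF_mono hq2
    · apply FF_ge hP hch hsupp hx (le_trans (FF_le_degS d' x) hdeg.ge)
      intro q hq1 hq2
      rw [hirr q hq1]
      exact FF_mono hq2
  exact recover hsupp hsupp' key

lemma chain_ub {d : P →₀ ℕ} (hch : IsChain (· ≤ ·) (d.support : Set P)) :
    ∃ c : P, ∀ α ∈ d.support, α ≤ c := by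
  rcases Finset.eq_empty_or_nonempty d.support with he | hne
  · exact ⟨⊥, fun α hα => absurd hα (he ▸ Finset.notMem_empty α)⟩
  · obtain ⟨a, ha, hamax⟩ : ∃ i ∈ d.support, ∀ x ∈ d.support, ¬ i < x := by
      obtain ⟨i, hi⟩ := Finset.exists_maximal hne
      exact ⟨i, hi.1, fun x hx hlt => not_le_of_gt hlt (hi.2 hx hlt.le)⟩
    refine ⟨a, fun α hα => ?_⟩
    rcases chain_total hch hα ha with h | h
    · exact h
    · rcases eq_or_ne a α with rfl | hne'
      · exact le_rfl
      · exact absurd (lt_of_le_of_ne h hne') (hamax α hα)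

end Recover

section Indep

open MvPolynomial
variable (K : Type*) [Field K]

lemma lin_indep (hP : DistribType P) :
    LinearIndependent K
      (fun d : {d : P →₀ ℕ // IsChain (· ≤ ·) (d.support : Set P)} =>
        Ideal.Quotient.mk (posetIdeal K P) (MvPolynomial.monomial d.1 (1 : K))) := by
  rw [linearIndependent_iff']
  intro s g hsum i hi
  set p : MvPolynomial P K := ∑ j ∈ s, monomial j.1 (g j) with hp
  have hQp : Ideal.Quotient.mk (posetIdeal K P) p = 0 := by
    rw [hp, map_sum, ← hsum]
    apply Finset.sum_congr rfl
    intro j _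
    have h1 : monomial j.1 (g j) = g j • monomial j.1 (1 : K) := by
      rw [smul_monomial, smul_eq_mul, mul_one]
    have hsm := map_smul (Ideal.Quotient.mkₐ K (posetIdeal K P)) (g j)
      (monomial j.1 (1 : K))
    simp only [Ideal.Quotient.mkₐ_eq_mk] at hsm
    rw [h1, hsm]
  have hpJ : p ∈ posetIdeal K P := Ideal.Quotient.eq_zero_iff_mem.1 hQp
  obtain ⟨c, hc⟩ := chain_ub i.2
  have hphi : phi K c p = 0 := phi_ideal K hP c hpJ
  have hterm : ∀ j : {d : P →₀ ℕ // IsChain (· ≤ ·) (d.support : Set P)},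
      phi K c (monomial j.1 (g j)) = if (∀ α ∈ j.1.support, α ≤ c)
        then monomial (EE j.1) (g j) else 0 := by
    intro j
    have hCm : monomial j.1 (g j) = C (g j) * monomial j.1 (1 : K) := by
      rw [C_mul_monomial, mul_one]
    have hC : phi K c (C (g j)) = C (g j) := by
      have := (phi K c).commutes (g j)
      rwa [algebraMap_eq, algebraMap_eq] at this
    by_cases hjc : ∀ α ∈ j.1.support, α ≤ c
    · rw [if_pos hjc, hCm, map_mul, hC, phi_monomial_eq K c hjc, C_mul_monomial, mul_one]
    · rw [if_neg hjc]
      push_neg at hjc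
      obtain ⟨α, hα1, hα2⟩ := hjc
      rw [hCm, map_mul, phi_monomial_zero K c hα1 hα2, mul_zero]
  have hco : coeff (EE i.1) (phi K c p) = g i := by
    rw [hp, map_sum, coeff_sum]
    rw [Finset.sum_eq_single_of_mem i hi]
    · rw [hterm i, if_pos hc, coeff_monomial, if_pos rfl]
    · intro j hj hji
      rw [hterm j]
      by_cases hjc : ∀ α ∈ j.1.support, α ≤ c
      · rw [if_pos hjc, coeff_monomial, if_neg]
        intro hEE
        exact hji (Subtype.ext (EE_inj hP j.2 i.2 hjc hc hEE))
      · rw [if_neg hjc, coeff_zero]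
  rw [hphi, coeff_zero] at hco
  exact hco.symm

end Indep

end HibiAux

/-- Let `P` be a finite poset of distributive type and `K` a field.  The residue classes
modulo `J_P` of the standard monomials, i.e. of the monomials whose support is a totally
ordered subset (chain) of `P`, form a `K`-vector space basis of `R_K[P] = K[P]/J_P`. -/
theorem statement5 {P : Type*} [PartialOrder P] [Fintype P] [OrderBot P]
    (hP : DistribType P) (K : Type*) [Field K] :
    LinearIndependent K
      (fun d : {d : P →₀ ℕ // IsChain (· ≤ ·) (d.support : Set P)} =>
        Ideal.Quotient.mk (posetIdeal K P) (MvPolynomial.monomial d.1 (1 : K))) ∧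
    Submodule.span K
      (Set.range (fun d : {d : P →₀ ℕ // IsChain (· ≤ ·) (d.support : Set P)} =>
        Ideal.Quotient.mk (posetIdeal K P) (MvPolynomial.monomial d.1 (1 : K)))) = ⊤ :=
  ⟨HibiAux.lin_indep K hP, HibiAux.span_eq_top K hP⟩
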